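/- Let f be an idempotent transformation of {1,...,n} of rank k whose kernel has exactly one non-singleton class, which has size 2. For any singular transformation a of rank k and any transposition (x y), we have a∘(x y) = a∘b where b is the identity or a product of three conjugates of f by permutations. -/
import Mathlib


/-- The full transformation monoid on `{1,...,n}`, modeled as `Function.End (Fin n)`
(multiplication is composition). -/
abbrev Tn (n : ℕ) := Function.End (Fin n)

/-- A permutation viewed as a transformation. -/
def ofPerm {n : ℕ} (g : Equiv.Perm (Fin n)) : Tn n := ⇑g

/-- The rank of a transformation: the size of its image. -/
def rnk {n : ℕ} (a : Tn n) : ℕ := (Finset.univ.image a).card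

/-- The symmetric group embedded in `Tn n` as a set. -/
def perms (n : ℕ) : Set (Tn n) := Set.range (fun g : Equiv.Perm (Fin n) => ofPerm g)

/-- The `S_n`-conjugacy class of a transformation. -/
def conjClass {n : ℕ} (t : Tn n) : Set (Tn n) :=
  {s | ∃ g : Equiv.Perm (Fin n), s = ofPerm g⁻¹ * t * ofPerm g}

/-- The elementary collapse sending `p` to `q` and fixing everything else. -/
def Ecol {n : ℕ} (p q : Fin n) : Tn n := fun t => if t = p then q else t

lemma Ecol_conj {n : ℕ} (p q p' q' : Fin n) (hpq : p ≠ q) (hpq' : p' ≠ q') :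
    Ecol p q ∈ conjClass (Ecol p' q') := by
  obtain ⟨g, hg1, hg2⟩ : ∃ g : Equiv.Perm (Fin n), g p = p' ∧ g q = q' := by
    refine ⟨(Equiv.swap p p').trans (Equiv.swap ((Equiv.swap p p') q) q'), ?_, ?_⟩
    · have h1 : (Equiv.swap p p') p = p' := Equiv.swap_apply_left _ _
      have h2 : (Equiv.swap p p') q ≠ p' := fun h =>
        hpq ((Equiv.swap p p').injective (h.trans h1.symm)).symm
      simp only [Equiv.trans_apply, h1]
      exact Equiv.swap_apply_of_ne_of_ne (Ne.symm h2) hpq'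
    · simp
  refine ⟨g, ?_⟩
  funext t
  show Ecol p q t = g⁻¹ (Ecol p' q' (g t))
  by_cases ht : t = p
  · subst ht
    simp [Ecol, hg1, ← hg2]
  · have : g t ≠ p' := by rw [← hg1]; exact fun h => ht (g.injective h)
    simp [Ecol, ht, this]

theorem stmt8 (n k : ℕ) (f : Tn n) (hf : f * f = f) (hfk : rnk f = k)
    (u v : Fin n) (huv : u ≠ v) (hker : f u = f v)
    (honly : ∀ w z : Fin n, w ≠ z → f w = f z → ({w, z} : Set (Fin n)) = {u, v})
    (a : Tn n) (ha : ¬ Function.Bijective a) (hak : rnk a = k)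
    (x y : Fin n) (hxy : x ≠ y) :
    ∃ b : Tn n, ofPerm (Equiv.swap x y) * a = b * a ∧
      (b = 1 ∨ ∃ e₁ e₂ e₃ : Tn n, e₁ ∈ conjClass f ∧ e₂ ∈ conjClass f ∧ e₃ ∈ conjClass f ∧
        b = e₃ * e₂ * e₁) := by
  -- idempotency pointwise
  have hidem : ∀ t, f (f t) = f t := fun t => congrFun hf t
  -- f fixes everything outside {u, v}
  have hfix : ∀ t : Fin n, t ≠ u → t ≠ v → f t = t := by
    intro t htu htv
    by_contra h
    have := honly (f t) t h (hidem t)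
    have ht : t ∈ ({u, v} : Set (Fin n)) := by
      rw [← this]; exact Set.mem_insert_iff.mpr (Or.inr rfl)
    rcases ht with h1 | h1 <;> simp_all
  -- f u ∈ {u, v}
  have hw : f u = u ∨ f u = v := by
    by_contra h
    push_neg at h
    obtain ⟨h1, h2⟩ := h
    have hfixw : f (f u) = f u := hidem u
    have hne : u ≠ f u := fun he => h1 he.symm
    have := honly u (f u) hne hfixw.symm
    have : f u ∈ ({u, v} : Set (Fin n)) := by
      rw [← this]; exact Set.mem_insert_iff.mpr (Or.inr rfl)
    rcases this with h3 | h3 <;> simp_all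
  -- f is an elementary collapse
  obtain ⟨p, q, hpq, hfE⟩ : ∃ p q : Fin n, p ≠ q ∧ f = Ecol p q := by
    rcases hw with h | h
    · refine ⟨v, u, huv.symm, ?_⟩
      funext t
      show f t = if t = v then u else t
      by_cases htv : t = v
      · subst htv; simp [← hker, h]
      · by_cases htu : t = u
        · subst htu; simp [h, htv]
        · simp [htv, hfix t htu htv]
    · refine ⟨u, v, huv, ?_⟩
      funext t
      show f t = if t = u then v else t
      by_cases htu : t = u
      · subst htu; simp [h]
      · by_cases htv : t = v
        · subst htv; simp [htu, ← hker, h]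
        · simp [htu, hfix t htu htv]
  -- a misses some point z
  have hsur : ¬ Function.Surjective a := fun h =>
    ha ⟨Finite.injective_iff_surjective.mpr h, h⟩
  simp only [Function.Surjective, not_forall] at hsur
  obtain ⟨z, hz⟩ := hsur
  have hz' : ∀ t, a t ≠ z := fun t h => hz ⟨t, h⟩
  have hconj : ∀ p' q' : Fin n, p' ≠ q' → Ecol p' q' ∈ conjClass f := by
    intro p' q' h
    rw [hfE]
    exact Ecol_conj p' q' p q h hpq
  by_cases hzx : z = x
  · -- b = Ecol y x, written as a cube
    refine ⟨Ecol y x, ?_, Or.inr ⟨Ecol y x, Ecol y x, Ecol y x,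
      hconj y x hxy.symm, hconj y x hxy.symm, hconj y x hxy.symm, ?_⟩⟩
    · funext t
      show Equiv.swap x y (a t) = Ecol y x (a t)
      have hax : a t ≠ x := hzx ▸ hz' t
      by_cases hay : a t = y
      · simp [hay, Ecol, Equiv.swap_apply_right]
      · simp [Ecol, hay, Equiv.swap_apply_of_ne_of_ne hax hay]
    · funext t
      show Ecol y x t = Ecol y x (Ecol y x (Ecol y x t))
      by_cases h : t = y <;> simp [Ecol, h, hxy.symm]
  · by_cases hzy : z = y
    · refine ⟨Ecol x y, ?_, Or.inr ⟨Ecol x y, Ecol x y, Ecol x y,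
        hconj x y hxy, hconj x y hxy, hconj x y hxy, ?_⟩⟩
      · funext t
        show Equiv.swap x y (a t) = Ecol x y (a t)
        have hay : a t ≠ y := hzy ▸ hz' t
        by_cases hax : a t = x
        · simp [hax, Ecol, Equiv.swap_apply_left]
        · simp [Ecol, hax, Equiv.swap_apply_of_ne_of_ne hax hay]
      · funext t
        show Ecol x y t = Ecol x y (Ecol x y (Ecol x y t))
        by_cases h : t = x <;> simp [Ecol, h, hxy]
    · -- z ∉ {x, y}; b = Ecol z y ∘ Ecol y x ∘ Ecol x z
      have hxz : x ≠ z := fun h => hzx h.symm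
      have hyz : y ≠ z := fun h => hzy h.symm
      refine ⟨Ecol z y * Ecol y x * Ecol x z, ?_,
        Or.inr ⟨Ecol x z, Ecol y x, Ecol z y,
          hconj x z hxz, hconj y x hxy.symm, hconj z y hyz.symm, rfl⟩⟩
      funext t
      show Equiv.swap x y (a t) = Ecol z y (Ecol y x (Ecol x z (a t)))
      have haz : a t ≠ z := hz' t
      by_cases hax : a t = x
      · simp [hax, Ecol, Equiv.swap_apply_left, hyz.symm, hxz.symm]
      · by_cases hay : a t = y
        · simp [hay, Ecol, Equiv.swap_apply_right, hxy.symm, hxz]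
        · simp [Ecol, hax, hay, haz, Equiv.swap_apply_of_ne_of_ne hax hay]
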